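/- Let X and Y be finite nonempty sets and let f, f' : X → Y. Suppose α, β, δ are nonnegative reals such that the number of pairs (y,y') ∈ Y × Y with |L_f(y) ∩ L_{f'}(y')| ≥ α is at most β·|Y|², and |L_f(y)| ≤ δ for every y ∈ Y. Then F(ρ_f, ρ_{f'})² ≤ (α² + β·δ²)·|Y|³/|X|². -/

import Mathlib

open Matrix BigOperators
open scoped ComplexOrder

/-- The positive semidefinite square root of a matrix (zero if the matrix is
not positive semidefinite). -/
noncomputable def msqrt {n : Type*} [Fintype n] [DecidableEq n]
    (A : Matrix n n ℂ) : Matrix n n ℂ :=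
  letI := Classical.dec A.PosSemidef
  if h : A.PosSemidef then
    (h.1.eigenvectorUnitary : Matrix n n ℂ) *
      diagonal ((↑) ∘ (fun i => Real.sqrt (h.1.eigenvalues i))) *
      (star h.1.eigenvectorUnitary : Matrix n n ℂ)
  else 0

/-- The fidelity `F(ρ,σ) = tr √(√ρ σ √ρ)` of two (positive semidefinite) matrices. -/
noncomputable def fidelity {n : Type*} [Fintype n] [DecidableEq n]
    (ρ σ : Matrix n n ℂ) : ℝ :=
  ((msqrt (msqrt ρ * σ * msqrt ρ)).trace).re

section Aux
variable {n : Type*} [Fintype n] [DecidableEq n]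

noncomputable def Matrix.PosSemidef.sqrt {A : Matrix n n ℂ} (hA : A.PosSemidef) :
    Matrix n n ℂ :=
  (hA.1.eigenvectorUnitary : Matrix n n ℂ) *
    diagonal ((↑) ∘ (fun i => Real.sqrt (hA.1.eigenvalues i))) *
    (star hA.1.eigenvectorUnitary : Matrix n n ℂ)

lemma Matrix.PosSemidef.posSemidef_sqrt {A : Matrix n n ℂ} (hA : A.PosSemidef) :
    hA.sqrt.PosSemidef := by
  have hD : (diagonal ((↑) ∘ (fun i => Real.sqrt (hA.1.eigenvalues i))) :
      Matrix n n ℂ).PosSemidef :=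
    posSemidef_diagonal_iff.mpr fun i => Complex.zero_le_real.mpr (Real.sqrt_nonneg _)
  have := hD.mul_mul_conjTranspose_same (hA.1.eigenvectorUnitary : Matrix n n ℂ)
  rw [Matrix.PosSemidef.sqrt, Matrix.star_eq_conjTranspose]
  exact this

lemma Matrix.PosSemidef.sqrt_mul_self {A : Matrix n n ℂ} (hA : A.PosSemidef) :
    hA.sqrt * hA.sqrt = A := by
  set U := hA.1.eigenvectorUnitary
  set D : Matrix n n ℂ := diagonal ((↑) ∘ (fun i => Real.sqrt (hA.1.eigenvalues i)))
  have hUU : (star U : Matrix n n ℂ) * U = 1 := Unitary.coe_star_mul_self U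
  have key : D * D = diagonal (RCLike.ofReal ∘ hA.1.eigenvalues) := by
    rw [diagonal_mul_diagonal]
    congr 1
    funext i
    simp only [Function.comp_apply]
    rw [← Complex.ofReal_mul, Real.mul_self_sqrt (hA.eigenvalues_nonneg i)]
    rfl
  calc hA.sqrt * hA.sqrt = (U : Matrix n n ℂ) * (D * ((star U : Matrix n n ℂ) * U) * D) *
        (star U : Matrix n n ℂ) := by
        simp only [Matrix.PosSemidef.sqrt, Matrix.mul_assoc]; rfl
    _ = (U : Matrix n n ℂ) * (D * D) * (star U : Matrix n n ℂ) := by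
        rw [hUU, Matrix.mul_one]
    _ = A := by
        rw [key]
        conv_rhs => rw [hA.1.spectral_theorem, Unitary.conjStarAlgAut_apply]

lemma msqrt_eq {A : Matrix n n ℂ} (hA : A.PosSemidef) : msqrt A = hA.sqrt := by
  unfold msqrt
  exact dif_pos hA

lemma trace_unitary_conj (U : Matrix.unitaryGroup n ℂ) (D : Matrix n n ℂ) :
    ((U : Matrix n n ℂ) * D * (star U : Matrix n n ℂ)).trace = D.trace := by
  rw [Matrix.trace_mul_cycle,
    (Matrix.mem_unitaryGroup_iff').mp U.2, one_mul]

lemma trace_sqrt {A : Matrix n n ℂ} (hA : A.PosSemidef) :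
    hA.sqrt.trace = ∑ i, (Real.sqrt (hA.1.eigenvalues i) : ℂ) := by
  rw [Matrix.PosSemidef.sqrt, trace_unitary_conj, Matrix.trace_diagonal]
  rfl

lemma trace_herm {A : Matrix n n ℂ} (hA : A.IsHermitian) :
    A.trace = ∑ i, (hA.eigenvalues i : ℂ) := by
  conv_lhs => rw [hA.spectral_theorem, Unitary.conjStarAlgAut_apply]
  rw [trace_unitary_conj, Matrix.trace_diagonal]
  rfl

lemma fidelity_sq_le {ρ σ : Matrix n n ℂ} (hρ : ρ.PosSemidef) (hσ : σ.PosSemidef) :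
    fidelity ρ σ ^ 2 ≤ (σ.rank : ℝ) * ((ρ * σ).trace).re := by
  set S := hρ.sqrt with hS
  have hSH : Sᴴ = S := hρ.posSemidef_sqrt.1
  have hM : (S * σ * S).PosSemidef := by
    have := hσ.mul_mul_conjTranspose_same S
    rwa [hSH] at this
  set lam := hM.1.eigenvalues with hlam
  have hfid : fidelity ρ σ = ∑ i, Real.sqrt (lam i) := by
    rw [fidelity, msqrt_eq hρ, ← hS, msqrt_eq hM, trace_sqrt hM]
    rw [Complex.re_sum]
    simp
    rfl
  have htr : ((ρ * σ).trace).re = ∑ i, lam i := by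
    have h1 : (ρ * σ).trace = (S * σ * S).trace := by
      rw [Matrix.trace_mul_cycle]
      have hSS : S * S = ρ := hρ.sqrt_mul_self
      rw [hSS]
    rw [h1, trace_herm hM.1, Complex.re_sum]
    simp
    rfl
  set s : Finset n := Finset.univ.filter fun i => lam i ≠ 0 with hsdef
  have hsum_eq : ∑ i, Real.sqrt (lam i) = ∑ i ∈ s, Real.sqrt (lam i) := by
    rw [hsdef]
    rw [Finset.sum_filter_of_ne]
    intro i _ h
    intro hzero
    exact h (by rw [hzero, Real.sqrt_zero])
  have hCS : (∑ i ∈ s, Real.sqrt (lam i)) ^ 2 ≤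
      (s.card : ℝ) * ∑ i ∈ s, (Real.sqrt (lam i)) ^ 2 :=
    sq_sum_le_card_mul_sum_sq
  have hsq : ∑ i ∈ s, (Real.sqrt (lam i)) ^ 2 = ∑ i ∈ s, lam i := by
    refine Finset.sum_congr rfl fun i _ => Real.sq_sqrt (hM.eigenvalues_nonneg i)
  have hsub : ∑ i ∈ s, lam i ≤ ∑ i, lam i := by
    refine Finset.sum_le_sum_of_subset_of_nonneg (Finset.filter_subset _ _) ?_
    intro i _ _
    exact hM.eigenvalues_nonneg i
  have hcard : (s.card : ℝ) ≤ (σ.rank : ℝ) := by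
    have h1 : s.card = (S * σ * S).rank := by
      rw [hM.1.rank_eq_card_non_zero_eigs, Fintype.card_subtype]
    have h2 : (S * σ * S).rank ≤ σ.rank :=
      le_trans (Matrix.rank_mul_le_left (S * σ) S) (Matrix.rank_mul_le_right S σ)
    exact_mod_cast h1 ▸ Nat.cast_le.mpr h2
  calc fidelity ρ σ ^ 2 = (∑ i ∈ s, Real.sqrt (lam i)) ^ 2 := by rw [hfid, hsum_eq]
    _ ≤ (s.card : ℝ) * ∑ i ∈ s, (Real.sqrt (lam i)) ^ 2 := hCS
    _ = (s.card : ℝ) * ∑ i ∈ s, lam i := by rw [hsq]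
    _ ≤ (σ.rank : ℝ) * ∑ i, lam i := by
        apply mul_le_mul hcard hsub (Finset.sum_nonneg fun i _ => hM.eigenvalues_nonneg i)
          (Nat.cast_nonneg _)
    _ = (σ.rank : ℝ) * ((ρ * σ).trace).re := by rw [htr]

end Aux

/-- The hiding state `ρ_f` of a function `f : X → Y`:
`(ρ_f)_{x,x'} = 1/|X|` if `f x = f x'` and `0` otherwise. -/
noncomputable def hidingState {X Y : Type*} [Fintype X] [DecidableEq Y]
    (f : X → Y) : Matrix X X ℂ :=
  Matrix.of fun x x' => if f x = f x' then (1 : ℂ) / (Fintype.card X) else 0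

section Hiding
variable {X Y : Type*} [Fintype X] [Fintype Y] [DecidableEq X] [DecidableEq Y]

noncomputable def Wmat (f : X → Y) : Matrix X Y ℂ :=
  Matrix.of fun x y => if f x = y then ((Real.sqrt (Fintype.card X))⁻¹ : ℝ) else 0

lemma hiding_eq_W [Nonempty X] (f : X → Y) : hidingState f = Wmat f * (Wmat f)ᴴ := by
  have hcc : ((((Real.sqrt (Fintype.card X))⁻¹ : ℝ)) : ℂ) * ((((Real.sqrt (Fintype.card X))⁻¹ : ℝ)) : ℂ)
      = (1 : ℂ) / (Fintype.card X) := by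
    have h : (Real.sqrt (Fintype.card X))⁻¹ * (Real.sqrt (Fintype.card X))⁻¹
        = (Fintype.card X : ℝ)⁻¹ := by
      rw [← mul_inv, Real.mul_self_sqrt (by positivity)]
    rw [← Complex.ofReal_mul, h, one_div, Complex.ofReal_inv, Complex.ofReal_natCast]
  ext x x'
  simp only [hidingState, Wmat, Matrix.mul_apply, Matrix.conjTranspose_apply, Matrix.of_apply]
  by_cases h : f x = f x'
  · rw [Finset.sum_eq_single (f x)]
    · rw [if_pos h, if_pos rfl, if_pos h.symm, RCLike.star_def, Complex.conj_ofReal]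
      exact hcc.symm
    · intro y _ hy
      simp [Ne.symm hy]
    · simp
  · rw [if_neg h, Finset.sum_eq_zero]
    intro y _
    by_cases h1 : f x = y
    · have h2 : f x' ≠ y := fun hc => h (h1.trans hc.symm)
      simp [h1, h2]
    · simp [h1]

lemma hiding_posSemidef [Nonempty X] (f : X → Y) : (hidingState f).PosSemidef := by
  rw [hiding_eq_W f]
  exact Matrix.posSemidef_self_mul_conjTranspose _

lemma hiding_rank_le [Nonempty X] (f : X → Y) :
    (hidingState f).rank ≤ Fintype.card Y := by
  rw [hiding_eq_W f]
  exact le_trans (Matrix.rank_mul_le_left _ _) (Matrix.rank_le_card_width _)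

lemma trace_hiding_mul [Nonempty X] (f f' : X → Y) :
    ((hidingState f) * (hidingState f')).trace.re =
      (∑ yy : Y × Y,
        ((Finset.univ.filter (fun x : X => f x = yy.1 ∧ f' x = yy.2)).card : ℝ) ^ 2)
        / (Fintype.card X : ℝ) ^ 2 := by
  classical
  set c : ℂ := (1 : ℂ) / (Fintype.card X) with hc
  set N : Y × Y → ℕ := fun yy =>
    (Finset.univ.filter (fun x : X => f x = yy.1 ∧ f' x = yy.2)).card with hN
  have hentry : ∀ x x' : X, (hidingState f) x x' * (hidingState f') x' x =
      if f x' = f x ∧ f' x' = f' x then c ^ 2 else 0 := by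
    intro x x'
    simp only [hidingState, Matrix.of_apply]
    by_cases h1 : f x = f x'
    · by_cases h2 : f' x' = f' x
      · rw [if_pos h1, if_pos h2, if_pos ⟨h1.symm, h2⟩, sq]
      · rw [if_pos h1, if_neg h2, if_neg (fun hc : f x' = f x ∧ f' x' = f' x => h2 hc.2), mul_zero]
    · have h1' : ¬ f x' = f x := fun h => h1 h.symm
      rw [if_neg h1, if_neg (fun hc : f x' = f x ∧ f' x' = f' x => h1' hc.1), zero_mul]
  have htr : ((hidingState f) * (hidingState f')).trace =
      (∑ yy : Y × Y, (N yy : ℂ) ^ 2) * c ^ 2 := by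
    rw [Matrix.trace]
    simp only [Matrix.diag_apply, Matrix.mul_apply]
    calc ∑ x : X, ∑ x' : X, (hidingState f) x x' * (hidingState f') x' x
        = ∑ x : X, (N (f x, f' x) : ℂ) * c ^ 2 := by
          refine Finset.sum_congr rfl fun x _ => ?_
          rw [Finset.sum_congr rfl fun x' _ => hentry x x']
          rw [Finset.sum_ite, Finset.sum_const, Finset.sum_const_zero, add_zero,
            nsmul_eq_mul]
      _ = ∑ yy : Y × Y, (N yy : ℂ) * c ^ 2 * (N yy : ℂ) := by
          rw [← Finset.sum_fiberwise' Finset.univ (fun x => (f x, f' x))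
            (fun yy => (N yy : ℂ) * c ^ 2)]
          refine Finset.sum_congr rfl fun yy _ => ?_
          rw [Finset.sum_const, nsmul_eq_mul]
          rw [mul_comm]
          congr 2
          rw [hN]
          apply Finset.card_bij (fun a _ => a) <;>
            simp +contextual [Prod.ext_iff]
      _ = (∑ yy : Y × Y, (N yy : ℂ) ^ 2) * c ^ 2 := by
          rw [Finset.sum_mul]
          refine Finset.sum_congr rfl fun yy _ => ?_
          ring
  rw [htr]
  have : (∑ yy : Y × Y, (N yy : ℂ) ^ 2) * c ^ 2 =
      (((∑ yy : Y × Y, (N yy : ℝ) ^ 2) / (Fintype.card X : ℝ) ^ 2 : ℝ) : ℂ) := by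
    rw [hc]
    push_cast
    ring
  rw [this, Complex.ofReal_re]

end Hiding

/-- If the number of pairs `(y,y')` with `|L_f(y) ∩ L_{f'}(y')| ≥ α` is at most
`β|Y|²`, and `|L_f(y)| ≤ δ` for all `y`, then `F(ρ_f,ρ_{f'})² ≤ (α² + βδ²)|Y|³/|X|²`. -/
theorem stmt_0 {X Y : Type*} [Fintype X] [Fintype Y] [DecidableEq X] [DecidableEq Y]
    [Nonempty X] [Nonempty Y] (f f' : X → Y) (α β δ : ℝ)
    (hα : 0 ≤ α) (hβ : 0 ≤ β) (hδ : 0 ≤ δ)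
    (hcount : ((Finset.univ.filter (fun yy : Y × Y =>
        α ≤ ((Finset.univ.filter (fun x : X => f x = yy.1 ∧ f' x = yy.2)).card : ℝ))).card : ℝ)
      ≤ β * (Fintype.card Y : ℝ) ^ 2)
    (hlevel : ∀ y : Y, ((Finset.univ.filter (fun x : X => f x = y)).card : ℝ) ≤ δ) :
    (fidelity (hidingState f) (hidingState f')) ^ 2 ≤
      (α ^ 2 + β * δ ^ 2) * (Fintype.card Y : ℝ) ^ 3 / (Fintype.card X : ℝ) ^ 2 := by
  have hX : (0 : ℝ) < (Fintype.card X : ℝ) := by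
    exact_mod_cast Fintype.card_pos
  have hfid := fidelity_sq_le (hiding_posSemidef f) (hiding_posSemidef f')
  have htr := trace_hiding_mul f f'
  -- bound on N yy
  have hNδ : ∀ yy : Y × Y,
      ((Finset.univ.filter (fun x : X => f x = yy.1 ∧ f' x = yy.2)).card : ℝ) ≤ δ := by
    intro yy
    refine le_trans ?_ (hlevel yy.1)
    have hsub : (Finset.univ.filter (fun x : X => f x = yy.1 ∧ f' x = yy.2)) ⊆
        (Finset.univ.filter (fun x : X => f x = yy.1)) := by
      intro x hx
      simp only [Finset.mem_filter] at hx ⊢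
      exact ⟨hx.1, hx.2.1⟩
    exact_mod_cast Finset.card_le_card hsub
  -- the combinatorial bound
  have hsum : ∑ yy : Y × Y,
      ((Finset.univ.filter (fun x : X => f x = yy.1 ∧ f' x = yy.2)).card : ℝ) ^ 2 ≤
      (α ^ 2 + β * δ ^ 2) * (Fintype.card Y : ℝ) ^ 2 := by
    set L := Finset.univ.filter (fun yy : Y × Y =>
        α ≤ ((Finset.univ.filter (fun x : X => f x = yy.1 ∧ f' x = yy.2)).card : ℝ)) with hL
    rw [← Finset.sum_filter_add_sum_filter_not Finset.univ (fun yy : Y × Y =>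
        α ≤ ((Finset.univ.filter (fun x : X => f x = yy.1 ∧ f' x = yy.2)).card : ℝ))
        (fun yy => ((Finset.univ.filter (fun x : X => f x = yy.1 ∧ f' x = yy.2)).card : ℝ) ^ 2)]
    have h1 : ∑ yy ∈ L,
        ((Finset.univ.filter (fun x : X => f x = yy.1 ∧ f' x = yy.2)).card : ℝ) ^ 2 ≤
        β * (Fintype.card Y : ℝ) ^ 2 * δ ^ 2 := by
      calc ∑ yy ∈ L,
          ((Finset.univ.filter (fun x : X => f x = yy.1 ∧ f' x = yy.2)).card : ℝ) ^ 2
          ≤ L.card • δ ^ 2 := by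
            refine Finset.sum_le_card_nsmul _ _ _ fun yy _ => ?_
            exact pow_le_pow_left₀ (Nat.cast_nonneg _) (hNδ yy) 2
        _ = (L.card : ℝ) * δ ^ 2 := by rw [nsmul_eq_mul]
        _ ≤ β * (Fintype.card Y : ℝ) ^ 2 * δ ^ 2 := by
            exact mul_le_mul_of_nonneg_right hcount (by positivity)
    have h2 : ∑ yy ∈ Finset.univ.filter (fun yy : Y × Y =>
        ¬ α ≤ ((Finset.univ.filter (fun x : X => f x = yy.1 ∧ f' x = yy.2)).card : ℝ)),
        ((Finset.univ.filter (fun x : X => f x = yy.1 ∧ f' x = yy.2)).card : ℝ) ^ 2 ≤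
        α ^ 2 * (Fintype.card Y : ℝ) ^ 2 := by
      set L' := Finset.univ.filter (fun yy : Y × Y =>
        ¬ α ≤ ((Finset.univ.filter (fun x : X => f x = yy.1 ∧ f' x = yy.2)).card : ℝ)) with hL'
      calc ∑ yy ∈ L',
          ((Finset.univ.filter (fun x : X => f x = yy.1 ∧ f' x = yy.2)).card : ℝ) ^ 2
          ≤ L'.card • α ^ 2 := by
            refine Finset.sum_le_card_nsmul _ _ _ fun yy hyy => ?_
            have hlt := (Finset.mem_filter.mp hyy).2
            exact pow_le_pow_left₀ (Nat.cast_nonneg _) (le_of_not_ge hlt) 2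
        _ = (L'.card : ℝ) * α ^ 2 := by rw [nsmul_eq_mul]
        _ ≤ (Fintype.card Y : ℝ) ^ 2 * α ^ 2 := by
            refine mul_le_mul_of_nonneg_right ?_ (by positivity)
            have h3 : L'.card ≤ (Finset.univ : Finset (Y × Y)).card :=
              Finset.card_le_univ L'
            have hcard : ((Finset.univ : Finset (Y × Y)).card : ℝ) =
                (Fintype.card Y : ℝ) ^ 2 := by
              rw [Finset.card_univ, Fintype.card_prod]
              push_cast
              ring
            calc (L'.card : ℝ) ≤ ((Finset.univ : Finset (Y × Y)).card : ℝ) := by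
                  exact_mod_cast h3
              _ = (Fintype.card Y : ℝ) ^ 2 := hcard
        _ = α ^ 2 * (Fintype.card Y : ℝ) ^ 2 := by ring
    calc _ ≤ β * (Fintype.card Y : ℝ) ^ 2 * δ ^ 2 + α ^ 2 * (Fintype.card Y : ℝ) ^ 2 :=
          add_le_add h1 h2
      _ = (α ^ 2 + β * δ ^ 2) * (Fintype.card Y : ℝ) ^ 2 := by ring
  have hrank : (((hidingState f' : Matrix X X ℂ)).rank : ℝ) ≤ (Fintype.card Y : ℝ) := by
    exact_mod_cast hiding_rank_le (X := X) f'
  obtain ⟨r, hr⟩ : ∃ r : ℕ, (hidingState f' : Matrix X X ℂ).rank = r := ⟨_, rfl⟩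
  rw [hr] at hfid hrank
  obtain ⟨T, hT⟩ : ∃ T : ℝ, ((hidingState f * hidingState f').trace).re = T := ⟨_, rfl⟩
  rw [hT] at hfid htr
  subst htr
  calc (fidelity (hidingState f) (hidingState f')) ^ 2
      ≤ (r : ℝ) *
        ((∑ yy : Y × Y,
          ((Finset.univ.filter (fun x : X => f x = yy.1 ∧ f' x = yy.2)).card : ℝ) ^ 2)
          / (Fintype.card X : ℝ) ^ 2) := hfid
    _ ≤ (Fintype.card Y : ℝ) *
        (((α ^ 2 + β * δ ^ 2) * (Fintype.card Y : ℝ) ^ 2) / (Fintype.card X : ℝ) ^ 2) := by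
        gcongr
    _ = (α ^ 2 + β * δ ^ 2) * (Fintype.card Y : ℝ) ^ 3 / (Fintype.card X : ℝ) ^ 2 := by
        field_simp
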